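/- Fix α > 0 and a dimension d ≥ 1. Let Φ : ℝᵈ × ℝ → ℝ and Φ̄ : ℝ → ℝ be continuous, and let v : ℝᵈ × ℝ → ℝᵈ be continuously differentiable and satisfy ∂ₜ v(x,t) + (v(x,t) · ∇ₓ) v(x,t) = (1/α)(Φ(x,t) − Φ̄(t)) v(x,t) for all (x,t). Let z : ℝ → ℝᵈ be differentiable with z′(t) = v(z(t), t) for all t and z(0) = x₀, and let w : ℝ → ℝ be differentiable with w′(t) = −(1/α)(Φ(z(t), t) − Φ̄(t)) w(t) for all t. Then the vector v(z(t), t) · w(t) is constant in t; that is, v(z(t), t) · w(t) = v(x₀, 0) · w(0) for all t ≥ 0. -/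

import Mathlib

/-- Combination of parts (i) and (ii) of the theorem in Section 3.3: the
product of the particle velocity and the particle weight is constant along
each trajectory, i.e. `v(z(t), t) w(t) = v(x₀, 0) w(0)`. -/
theorem velocity_weight_product_constant
    (α : ℝ) (hα : 0 < α) (d : ℕ) (hd : 1 ≤ d)
    (Φ : EuclideanSpace ℝ (Fin d) × ℝ → ℝ) (hΦ : Continuous Φ)
    (Φbar : ℝ → ℝ) (hΦbar : Continuous Φbar)
    (v : EuclideanSpace ℝ (Fin d) × ℝ → EuclideanSpace ℝ (Fin d))
    (hv : ContDiff ℝ 1 v)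
    (hpde : ∀ p : EuclideanSpace ℝ (Fin d) × ℝ,
      fderiv ℝ v p (v p, 1) = ((1 / α) * (Φ p - Φbar p.2)) • v p)
    (z : ℝ → EuclideanSpace ℝ (Fin d)) (x₀ : EuclideanSpace ℝ (Fin d))
    (hz : ∀ t, HasDerivAt z (v (z t, t)) t) (hz0 : z 0 = x₀)
    (w : ℝ → ℝ) (hw : Differentiable ℝ w)
    (hwode : ∀ t, deriv w t = -(1 / α) * (Φ (z t, t) - Φbar t) * w t) :
    ∀ t ≥ (0 : ℝ), w t • v (z t, t) = w 0 • v (x₀, 0) := by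
  set g : ℝ → EuclideanSpace ℝ (Fin d) := fun t => v (z t, t) with hg
  have hgderiv : ∀ t, HasDerivAt g
      (((1 / α) * (Φ (z t, t) - Φbar t)) • g t) t := by
    intro t
    have hpair : HasDerivAt (fun s => (z s, s)) (v (z t, t), 1) t :=
      (hz t).prodMk (hasDerivAt_id t)
    have hvd : HasFDerivAt v (fderiv ℝ v (z t, t)) (z t, t) :=
      (hv.differentiable one_ne_zero (z t, t)).hasFDerivAt
    have hc : HasDerivAt (fun s => v (z s, s)) (fderiv ℝ v (z t, t) (v (z t, t), 1)) t :=
      HasFDerivAt.comp_hasDerivAt (f := fun s => (z s, s)) t hvd hpair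
    simpa [hpde (z t, t)] using hc
  have hfderiv : ∀ t, HasDerivAt (fun s => w s • g s) 0 t := by
    intro t
    have hwt : HasDerivAt w (deriv w t) t := (hw t).hasDerivAt
    have := hwt.smul (hgderiv t)
    rw [hwode t] at this
    refine HasDerivAt.congr_deriv this ?_
    rw [smul_smul]
    module
  have hconst : ∀ t : ℝ, w t • g t = w 0 • g 0 := by
    intro t
    have hdiff : Differentiable ℝ (fun s => w s • g s) := fun s =>
      (hfderiv s).differentiableAt
    have hzero : ∀ s, fderiv ℝ (fun s => w s • g s) s = 0 := by
      intro s
      rw [((hfderiv s).hasFDerivAt).fderiv]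
      ext u
      simp
    exact is_const_of_fderiv_eq_zero hdiff hzero t 0
  intro t _
  simpa [hg, hz0] using hconst t
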